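/- Let H₁ and H₂ be real Hilbert spaces and K : H₁ → H₂ a bounded linear operator with adjoint K* and operator norm ‖K‖. Let τ, σ > 0 satisfy τσ‖K‖² < 1. Let A₁ be a maximally monotone set-valued operator on H₁ with J₁ the resolvent of τA₁, and A₂ a maximally monotone set-valued operator on H₂ with J₂ the resolvent of σA₂. Suppose (u, v) ∈ H₁ × H₂ satisfies −K*v ∈ A₁(u) and Ku ∈ A₂(v). Let u_0 ∈ H₁, v_0 ∈ H₂ and define, for k ≥ 0 (with u_{-1} := u_0 allowed by taking the scheme from k = 1, or any fixed u_{-1}): u_{k+1} = J₁(u_k − τK*v_k) and v_{k+1} = J₂(v_k + σK u_{k+1}) + σ(K u_{k+1} − K u_k). Then for every k: (1/τ)‖u_{k+1} − u‖² + (1/σ)‖(v_{k+1} − σK u_{k+1}) − (v − σK u)‖² ≤ (1/τ)‖u_k − u‖² + (1/σ)‖(v_k − σK u_k) − (v − σK u)‖². -/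
import Mathlib


open scoped RealInnerProductSpace
open Filter

/-- A set-valued operator `A ⊆ H × H` is monotone. -/
def IsMonotoneOp {H : Type*} [NormedAddCommGroup H] [InnerProductSpace ℝ H]
    (A : Set (H × H)) : Prop :=
  ∀ p ∈ A, ∀ q ∈ A, (0 : ℝ) ≤ ⟪p.2 - q.2, p.1 - q.1⟫

/-- Maximal monotonicity. -/
def IsMaximalMonotoneOp {H : Type*} [NormedAddCommGroup H] [InnerProductSpace ℝ H]
    (A : Set (H × H)) : Prop :=
  IsMonotoneOp A ∧
    ∀ p : H × H, (∀ q ∈ A, (0 : ℝ) ≤ ⟪p.2 - q.2, p.1 - q.1⟫) → p ∈ A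

/-- The scaled operator `cA = {(x, c•u) : (x,u) ∈ A}`. -/
def smulOp {H : Type*} [NormedAddCommGroup H] [InnerProductSpace ℝ H]
    (c : ℝ) (A : Set (H × H)) : Set (H × H) :=
  (fun p : H × H => (p.1, c • p.2)) '' A

set_option maxHeartbeats 1000000 in
lemma aux_key
    {H₁ : Type*} [NormedAddCommGroup H₁] [InnerProductSpace ℝ H₁]
    {H₂ : Type*} [NormedAddCommGroup H₂] [InnerProductSpace ℝ H₂]
    (K : H₁ →L[ℝ] H₂) (τ σ : ℝ) (hτ : 0 < τ) (hσ : 0 < σ)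
    (hK : τ * σ * ‖K‖ ^ 2 < 1)
    (a' d : H₁) (e c : H₂)
    (h1 : 0 ≤ ⟪d, a'⟫ - τ * ⟪e + c, K a'⟫)
    (h2 : 0 ≤ ⟪e, c⟫ + σ * ⟪K a', c⟫) :
    (1/τ) * ‖a'‖ ^ 2 + (1/σ) * ‖c - σ • K (a' + d)‖ ^ 2 ≤
      (1/τ) * ‖a' + d‖ ^ 2 + (1/σ) * ‖(c - σ • K (a' + d)) + e‖ ^ 2 := by
  have hnd : ‖a' + d‖ ^ 2 = ‖a'‖ ^ 2 + 2 * ⟪a', d⟫ + ‖d‖ ^ 2 := norm_add_sq_real a' d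
  have hne : ‖(c - σ • K (a' + d)) + e‖ ^ 2
      = ‖c - σ • K (a' + d)‖ ^ 2 + 2 * ⟪c - σ • K (a' + d), e⟫ + ‖e‖ ^ 2 :=
    norm_add_sq_real _ _
  have hb : ⟪c - σ • K (a' + d), e⟫ = ⟪c, e⟫ - σ * ⟪K a', e⟫ - σ * ⟪K d, e⟫ := by
    rw [inner_sub_left, real_inner_smul_left, map_add, inner_add_left]
    ring
  have hcs : ⟪K d, e⟫ ≤ ‖K‖ * ‖d‖ * ‖e‖ := by
    calc ⟪K d, e⟫ ≤ ‖K d‖ * ‖e‖ := real_inner_le_norm _ _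
    _ ≤ ‖K‖ * ‖d‖ * ‖e‖ :=
        mul_le_mul_of_nonneg_right (K.le_opNorm d) (norm_nonneg e)
  have hsym1 : ⟪a', d⟫ = ⟪d, a'⟫ := real_inner_comm _ _
  have hsym2 : ⟪c, e⟫ = ⟪e, c⟫ := real_inner_comm _ _
  have hsym3 : ⟪K a', e⟫ = ⟪e, K a'⟫ := real_inner_comm _ _
  have hsym4 : ⟪K a', c⟫ = ⟪c, K a'⟫ := real_inner_comm _ _
  have h1' : 0 ≤ ⟪d, a'⟫ - τ * (⟪e, K a'⟫ + ⟪c, K a'⟫) := by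
    rwa [inner_add_left] at h1
  have hKn : 0 ≤ ‖K‖ := norm_nonneg _
  have hdn : 0 ≤ ‖d‖ := norm_nonneg _
  have hen : 0 ≤ ‖e‖ := norm_nonneg _
  have hK' : 0 ≤ 1 - τ * σ * ‖K‖ ^ 2 := by linarith
  have hq : 2 * τ * σ * (‖K‖ * ‖d‖ * ‖e‖) ≤ σ * ‖d‖ ^ 2 + τ * ‖e‖ ^ 2 := by
    nlinarith [sq_nonneg (σ * ‖d‖ - τ * σ * ‖K‖ * ‖e‖),
      mul_nonneg (mul_nonneg (mul_nonneg hτ.le hσ.le) hK') (sq_nonneg ‖e‖), hσ, hτ]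
  rw [← hsym1, ← hsym3, ← hsym4] at h1'
  rw [← hsym2] at h2
  have hmain : 0 ≤ σ * (2 * ⟪a', d⟫ + ‖d‖ ^ 2)
      + τ * (2 * (⟪c, e⟫ - σ * ⟪K a', e⟫ - σ * ⟪K d, e⟫) + ‖e‖ ^ 2) := by
    nlinarith [hq, mul_le_mul_of_nonneg_left hcs (by positivity : (0:ℝ) ≤ 2 * τ * σ),
      mul_nonneg hσ.le h1', mul_nonneg hτ.le h2]
  rw [hnd, hne, hb]
  rw [div_mul_eq_mul_div, div_mul_eq_mul_div, div_mul_eq_mul_div, div_mul_eq_mul_div,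
    div_add_div _ _ (ne_of_gt hτ) (ne_of_gt hσ), div_add_div _ _ (ne_of_gt hτ) (ne_of_gt hσ),
    div_le_div_iff₀ (by positivity) (by positivity)]
  nlinarith [mul_nonneg (mul_pos hτ hσ).le hmain]

/-- Inequality (37) of the paper: the Lyapunov decrease for the new primal-dual
algorithm `u_{k+1} = J₁(u_k − τK*v_k)`,
`v_{k+1} = J₂(v_k + σKu_{k+1}) + σ(Ku_{k+1} − Ku_k)`. -/
theorem statement12
    {H₁ : Type*} [NormedAddCommGroup H₁] [InnerProductSpace ℝ H₁] [CompleteSpace H₁]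
    {H₂ : Type*} [NormedAddCommGroup H₂] [InnerProductSpace ℝ H₂] [CompleteSpace H₂]
    (K : H₁ →L[ℝ] H₂)
    (τ σ : ℝ) (hτ : 0 < τ) (hσ : 0 < σ) (hK : τ * σ * ‖K‖ ^ 2 < 1)
    (A₁ : Set (H₁ × H₁)) (hA₁ : IsMaximalMonotoneOp A₁)
    (A₂ : Set (H₂ × H₂)) (hA₂ : IsMaximalMonotoneOp A₂)
    (J₁ : H₁ → H₁) (hJ₁ : ∀ w : H₁, (J₁ w, w - J₁ w) ∈ smulOp τ A₁)
    (J₂ : H₂ → H₂) (hJ₂ : ∀ w : H₂, (J₂ w, w - J₂ w) ∈ smulOp σ A₂)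
    (u : H₁) (v : H₂)
    (hu : (u, -(ContinuousLinearMap.adjoint K v)) ∈ A₁)
    (hv : (v, K u) ∈ A₂)
    (us : ℕ → H₁) (vs : ℕ → H₂)
    (hrecu : ∀ k : ℕ,
      us (k + 1) = J₁ (us k - τ • (ContinuousLinearMap.adjoint K (vs k))))
    (hrecv : ∀ k : ℕ,
      vs (k + 1) = J₂ (vs k + σ • K (us (k + 1))) + σ • (K (us (k + 1)) - K (us k)))
    (k : ℕ) :
    (1 / τ) * ‖us (k + 1) - u‖ ^ 2
        + (1 / σ) * ‖(vs (k + 1) - σ • K (us (k + 1))) - (v - σ • K u)‖ ^ 2 ≤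
      (1 / τ) * ‖us k - u‖ ^ 2
        + (1 / σ) * ‖(vs k - σ • K (us k)) - (v - σ • K u)‖ ^ 2 := by

  obtain ⟨hA₁m, -⟩ := hA₁
  obtain ⟨hA₂m, -⟩ := hA₂
  have hp := hJ₁ (us k - τ • (ContinuousLinearMap.adjoint K (vs k)))
  have hq := hJ₂ (vs k + σ • K (us (k + 1)))
  simp only [smulOp, Set.mem_image, Prod.mk.injEq] at hp hq
  obtain ⟨p, hpA, hp1, hp2⟩ := hp
  obtain ⟨q, hqA, hq1, hq2⟩ := hq
  rw [← hrecu k] at hp1 hp2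
  rw [← hq1] at hq2
  have m1 := hA₁m p hpA (u, -(ContinuousLinearMap.adjoint K v)) hu
  have m2 := hA₂m q hqA (v, K u) hv
  have h1 : 0 ≤ ⟪us k - us (k+1), us (k+1) - u⟫
      - τ * ⟪(vs k - q.1) + (q.1 - v), K (us (k+1) - u)⟫ := by
    have m1' : 0 ≤ ⟪τ • p.2 - τ • (-(ContinuousLinearMap.adjoint K v)), p.1 - u⟫ := by
      rw [← smul_sub, real_inner_smul_left]
      exact mul_nonneg hτ.le m1
    rw [hp2, hp1] at m1'
    have hec : (vs k - q.1) + (q.1 - v) = vs k - v := by abel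
    have heq : ⟪us k - us (k+1), us (k+1) - u⟫ - τ * ⟪vs k - v, K (us (k+1) - u)⟫
        = ⟪(us k - τ • (ContinuousLinearMap.adjoint K (vs k)) - us (k+1))
            - τ • (-(ContinuousLinearMap.adjoint K v)), us (k+1) - u⟫ := by
      simp only [inner_sub_left, real_inner_smul_left, inner_neg_left,
        ContinuousLinearMap.adjoint_inner_left, smul_neg]
      ring
    rw [hec, heq]
    exact m1'
  have h2 : 0 ≤ ⟪vs k - q.1, q.1 - v⟫ + σ * ⟪K (us (k+1) - u), q.1 - v⟫ := by
    have m2' : 0 ≤ ⟪σ • q.2 - σ • K u, q.1 - v⟫ := by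
      rw [← smul_sub, real_inner_smul_left]
      exact mul_nonneg hσ.le m2
    rw [hq2] at m2'
    have heq : ⟪vs k - q.1, q.1 - v⟫ + σ * ⟪K (us (k+1) - u), q.1 - v⟫
        = ⟪(vs k + σ • K (us (k+1)) - q.1) - σ • K u, q.1 - v⟫ := by
      simp only [inner_sub_left, inner_add_left, real_inner_smul_left, map_sub]
      ring
    rw [heq]
    exact m2'
  have key := aux_key K τ σ hτ hσ hK (us (k+1) - u) (us k - us (k+1))
    (vs k - q.1) (q.1 - v) h1 h2
  have e1 : us (k+1) - u + (us k - us (k+1)) = us k - u := by abel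
  rw [e1] at key
  have e3 : q.1 - v - σ • K (us k - u) + (vs k - q.1)
      = (vs k - σ • K (us k)) - (v - σ • K u) := by
    simp only [map_sub, smul_sub]
    abel
  rw [e3] at key
  have e2 : q.1 - v - σ • K (us k - u)
      = (vs (k+1) - σ • K (us (k+1))) - (v - σ • K u) := by
    rw [hrecv k, ← hq1]
    simp only [map_sub, smul_sub]
    abel
  rw [e2] at key
  exact key
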